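/- Let q = 2^n and f(x) = x^k be an APN map on F_q. Then gcd(k, q−1) = 1 if n is odd and gcd(k, q−1) = 3 if n is even. -/
import Mathlib

open Finset
open scoped Classical

/-- Number of preimages of `y` under `f`. -/
noncomputable def preCard {F : Type*} [Fintype F] (f : F → F) (y : F) : ℕ :=
  (Finset.univ.filter fun x => f x = y).card

/-- `M_r(f)`: the number of elements with exactly `r` preimages under `f`. -/
noncomputable def Mcount {F : Type*} [Fintype F] (f : F → F) (r : ℕ) : ℕ :=
  (Finset.univ.filter fun y => preCard f y = r).card

/-- `f` is almost perfect nonlinear: every equation `f (x+a) + f x = b` with `a ≠ 0`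
has at most two solutions. -/
def IsAPN {F : Type*} [Field F] [Fintype F] (f : F → F) : Prop :=
  ∀ a b : F, a ≠ 0 → (Finset.univ.filter fun x => f (x + a) + f x = b).card ≤ 2

/-- In a finite field, the unit group has an element of each order dividing its cardinality. -/
lemma exists_unit_orderOf {F : Type*} [Field F] [Fintype F] {m : ℕ}
    (hm : m ∣ Fintype.card Fˣ) : ∃ ζ : Fˣ, orderOf ζ = m := by
  obtain ⟨g, hg⟩ := IsCyclic.exists_ofOrder_eq_natCard (α := Fˣ)
  rw [Nat.card_eq_fintype_card] at hg
  obtain ⟨c, hc⟩ := hm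
  have hc0 : 0 < c := by
    rcases Nat.eq_zero_or_pos c with h | h
    · subst h; rw [mul_zero] at hc; have := Fintype.card_pos (α := Fˣ); omega
    · exact h
  refine ⟨g ^ c, ?_⟩
  rw [orderOf_pow, hg, hc, Nat.gcd_eq_right ⟨m, mul_comm m c⟩, Nat.mul_div_cancel _ hc0]

lemma two_pow_mod_three (n : ℕ) : 2 ^ n % 3 = if Even n then 1 else 2 := by
  induction n with
  | zero => simp
  | succ m ih =>
    rw [pow_succ, Nat.mul_mod, ih]
    rcases Nat.even_or_odd m with h | h
    · simp [h, Nat.even_add_one]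
    · simp [Nat.not_even_iff_odd.mpr h, Nat.even_add_one, h]

lemma three_dvd_iff (n : ℕ) : 3 ∣ 2 ^ n - 1 ↔ Even n := by
  have h1 : 1 ≤ 2 ^ n := Nat.one_le_two_pow
  have h := two_pow_mod_three n
  rcases Nat.even_or_odd n with he | ho
  · simp only [he, if_true] at h
    simp only [he, iff_true]
    omega
  · simp only [Nat.not_even_iff_odd.mpr ho, if_false] at h
    simp only [Nat.not_even_iff_odd.mpr ho, iff_false]
    omega

/-- if `x ↦ x^k` is APN on `F_{2^n}`, then `gcd(k, 2^n−1) = 1` for odd `n`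
and `gcd(k, 2^n−1) = 3` for even `n`. -/
theorem apn_monomial_gcd {F : Type*} [Field F] [Fintype F] [CharP F 2] {n k : ℕ}
    (hn : 0 < n) (hcard : Fintype.card F = 2 ^ n)
    (hf : IsAPN (fun x : F => x ^ k)) :
    (Odd n → Nat.gcd k (2 ^ n - 1) = 1) ∧ (Even n → Nat.gcd k (2 ^ n - 1) = 3) := by
  classical
  have hq2 : 2 ≤ 2 ^ n := by
    calc 2 = 2 ^ 1 := (pow_one 2).symm
    _ ≤ 2 ^ n := Nat.pow_le_pow_right (by norm_num) hn
  have hunits : Fintype.card Fˣ = 2 ^ n - 1 := by rw [Fintype.card_units, hcard]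
  have htwo : (2 : F) = 0 := by exact_mod_cast CharP.cast_eq_zero F 2
  set d := Nat.gcd k (2 ^ n - 1) with hd
  have hdq : d ∣ 2 ^ n - 1 := Nat.gcd_dvd_right _ _
  have hdk : d ∣ k := Nat.gcd_dvd_left _ _
  have hd0 : 0 < d := Nat.gcd_pos_of_pos_right _ (by omega)
  -- Step 1: d ≤ 3, via the d - 1 solutions of (x+1)^k + x^k = 0.
  have hd3 : d ≤ 3 := by
    obtain ⟨ζ, hζ⟩ := exists_unit_orderOf (hunits ▸ hdq)
    have key : d - 1 ≤ 2 := by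
      have hinj : Set.InjOn (fun i => ((ζ : F) ^ i + 1)⁻¹) ↑(Finset.Ico 1 d) := by
        intro i hi j hj hij
        simp only at hij
        have h1 : (ζ : F) ^ i = (ζ : F) ^ j := add_right_cancel (inv_injective hij)
        have h2 : ζ ^ i = ζ ^ j := Units.ext (by push_cast; exact h1)
        simp only [Finset.coe_Ico, Set.mem_Ico] at hi hj
        exact pow_injOn_Iio_orderOf (by simp [hζ, hi.2]) (by simp [hζ, hj.2]) h2
      calc d - 1 = ((Finset.Ico 1 d).image fun i => ((ζ : F) ^ i + 1)⁻¹).card := by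
            rw [Finset.card_image_of_injOn hinj, Nat.card_Ico]
        _ ≤ 2 := by
            refine le_trans (Finset.card_le_card ?_) (hf 1 0 one_ne_zero)
            intro x hx
            simp only [Finset.mem_image] at hx
            obtain ⟨i, hi, rfl⟩ := hx
            rw [Finset.mem_filter]
            refine ⟨Finset.mem_univ _, ?_⟩
            rw [Finset.mem_Ico] at hi
            set u : F := (ζ : F) ^ i with hu
            have hu1 : u ≠ 1 := by
              intro h
              have h' : ζ ^ i = 1 := Units.ext (by push_cast; exact h)
              exact pow_ne_one_of_lt_orderOf (by omega) (by rw [hζ]; exact hi.2) h'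
            have hud : u ^ d = 1 := by
              rw [hu, ← pow_mul, mul_comm, pow_mul]
              have h1 : ζ ^ d = 1 := by rw [← hζ]; exact pow_orderOf_eq_one ζ
              have h2 : ((ζ : F)) ^ d = 1 := by simpa using congrArg Units.val h1
              rw [h2, one_pow]
            have huk : u ^ k = 1 := by
              obtain ⟨t, ht⟩ := hdk
              rw [ht, pow_mul, hud, one_pow]
            have hu0 : u + 1 ≠ 0 := fun h => hu1 (by linear_combination h - htwo)
            have hx1 : (u + 1)⁻¹ + 1 = u * (u + 1)⁻¹ := by
              apply mul_left_cancel₀ hu0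
              rw [mul_add, mul_inv_cancel₀ hu0, mul_one,
                show (u + 1) * (u * (u + 1)⁻¹) = u * ((u + 1) * (u + 1)⁻¹) by ring,
                mul_inv_cancel₀ hu0, mul_one]
              linear_combination htwo
            show ((u + 1)⁻¹ + 1) ^ k + ((u + 1)⁻¹) ^ k = 0
            rw [hx1, mul_pow, huk, one_mul, CharTwo.add_self_eq_zero]
    omega
  have hd2 : d ≠ 2 := by
    intro h
    have h2 : (2 : ℕ) ∣ 2 ^ n - 1 := h ▸ hdq
    have h2' : (2 : ℕ) ∣ 2 ^ n := dvd_pow_self 2 hn.ne'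
    omega
  constructor
  · intro hodd
    have h3 : ¬ (3 ∣ 2 ^ n - 1) := by
      rw [three_dvd_iff]; exact Nat.not_even_iff_odd.mpr hodd
    have hne3 : d ≠ 3 := fun h => h3 (h ▸ hdq)
    omega
  · intro heven
    have h3 : (3 : ℕ) ∣ 2 ^ n - 1 := (three_dvd_iff n).mpr heven
    have h3k : 3 ∣ k := by
      by_contra h3k
      obtain ⟨ζ, hζ⟩ := exists_unit_orderOf (hunits ▸ h3)
      set w : F := (ζ : F) with hwdef
      have hw1 : w ≠ 1 := by
        intro h
        have h' : ζ = 1 := Units.ext (by push_cast; exact h)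
        rw [h', orderOf_one] at hζ; omega
      have hw3 : w ^ 3 = 1 := by
        have h1 := pow_orderOf_eq_one ζ
        rw [hζ] at h1
        simpa using congrArg Units.val h1
      have cube : ∀ z : F, z ^ 3 = 1 → z ≠ 1 → z ^ 2 + z + 1 = 0 := by
        intro z h3z h1z
        have hfac : (z + 1) * (z ^ 2 + z + 1) = 0 := by
          linear_combination h3z + (z ^ 2 + z + 1) * htwo
        rcases mul_eq_zero.mp hfac with h | h
        · exact absurd (by linear_combination h - htwo) h1z
        · exact h
      have hw2 : w ^ 2 = w + 1 := by
        linear_combination (cube w hw3 hw1) - (w + 1) * htwo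
      set v : F := w ^ k with hvdef
      have hvne : v ≠ 1 := by
        intro h
        apply h3k
        rw [← hζ]
        apply orderOf_dvd_of_pow_eq_one
        exact Units.ext (by push_cast; exact h)
      have hv3 : v ^ 3 = 1 := by rw [hvdef, ← pow_mul, mul_comm, pow_mul, hw3, one_pow]
      have hv : v ^ 2 + v + 1 = 0 := cube v hv3 hvne
      have hk0 : k ≠ 0 := fun h => h3k (h ▸ dvd_zero 3)
      have hone : (1 : F) + 1 = 0 := by linear_combination htwo
      have hw0 : w ≠ 0 := Units.ne_zero ζ
      have hw10 : w + 1 ≠ 0 := fun h => hw1 (by linear_combination h - htwo)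
      have hw11 : w + 1 ≠ 1 := fun h => hw0 (by linear_combination h)
      have hww1 : w ≠ w + 1 := fun h => one_ne_zero (α := F) (by linear_combination -h)
      have hwk2 : (w + 1) ^ k = v ^ 2 := by
        rw [← hw2, ← pow_mul, mul_comm, pow_mul]
      have hle : ({0, 1, w, w + 1} : Finset F).card ≤ 2 := by
        refine le_trans (Finset.card_le_card ?_) (hf 1 1 one_ne_zero)
        intro x hx
        rw [Finset.mem_filter]
        refine ⟨Finset.mem_univ _, ?_⟩
        simp only [Finset.mem_insert, Finset.mem_singleton] at hx
        rcases hx with rfl | rfl | rfl | rfl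
        · show (0 + 1) ^ k + 0 ^ k = 1
          rw [zero_add, one_pow, zero_pow hk0, add_zero]
        · show (1 + 1) ^ k + 1 ^ k = 1
          rw [hone, zero_pow hk0, one_pow, zero_add]
        · show (w + 1) ^ k + w ^ k = 1
          rw [hwk2]; linear_combination hv - htwo
        · show (w + 1 + 1) ^ k + (w + 1) ^ k = 1
          rw [add_assoc, hone, add_zero, hwk2]; linear_combination hv - htwo
      have hcard4 : ({0, 1, w, w + 1} : Finset F).card = 4 := by
        rw [show ({0, 1, w, w + 1} : Finset F)
            = insert 0 (insert 1 (insert w {w + 1})) from rfl,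
          Finset.card_insert_of_notMem (by simp [zero_ne_one, Ne.symm hw0, Ne.symm hw10]),
          Finset.card_insert_of_notMem (by simp [Ne.symm hw1, Ne.symm hw11]),
          Finset.card_insert_of_notMem (by simp [hww1]),
          Finset.card_singleton]
      omega
    have h3d : 3 ∣ d := Nat.dvd_gcd h3k h3
    omega
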